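/- Let p be a prime, let G be a finite p-group of rank n with Frattini subgroup Φ(G), and let H be a subgroup with Φ(G) ≤ H ≤ G. Then for 0 ≤ k ≤ n, the intersection number of H equals n − k if and only if the index [G : H] equals p^{n−k} (equivalently, the image of H in G/Φ(G) has order p^k). -/

import Mathlib

open Subgroup
open scoped commutatorElement

section Aux

variable {p : ℕ} {G : Type*} [Group G] [Finite G]

/-- In a finite `p`-group, every maximal subgroup has index `p`. -/
lemma coatom_index_eq_prime (hp : p.Prime) (hG : IsPGroup p G) {M : Subgroup G}
    (hM : IsCoatom M) : M.index = p := by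
  haveI : Fact p.Prime := ⟨hp⟩
  have hnormal : ∀ K : Subgroup G, IsCoatom K → K.Normal :=
    ((isNilpotent_of_finite_tfae (G := G)).out 0 2 rfl rfl).mp hG.isNilpotent
  haveI : M.Normal := hnormal M hM
  -- every subgroup of the quotient is ⊥ or ⊤
  have hsub : ∀ S : Subgroup (G ⧸ M), S = ⊥ ∨ S = ⊤ := by
    intro S
    have h1 : M ≤ S.comap (QuotientGroup.mk' M) := by
      intro x hx
      have hx1 : QuotientGroup.mk' M x = 1 := (QuotientGroup.eq_one_iff x).mpr hx
      simpa [Subgroup.mem_comap, hx1] using S.one_mem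
    have hS : S = (S.comap (QuotientGroup.mk' M)).map (QuotientGroup.mk' M) :=
      (Subgroup.map_comap_eq_self_of_surjective (QuotientGroup.mk'_surjective M) S).symm
    rcases h1.lt_or_eq with h | h
    · right
      rw [hS, hM.2 _ h]
      exact Subgroup.map_top_of_surjective _ (QuotientGroup.mk'_surjective M)
    · left
      rw [hS, ← h]
      rw [eq_bot_iff]
      rintro y ⟨x, hx, rfl⟩
      simp [(QuotientGroup.eq_one_iff x).mpr (h ▸ hx : x ∈ M)]
  -- the quotient is a nontrivial p-group
  have hQ : IsPGroup p (G ⧸ M) := hG.to_quotient M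
  have hcard : Nat.card (G ⧸ M) = M.index := rfl
  have hne1 : Nat.card (G ⧸ M) ≠ 1 := by
    rw [hcard]
    intro h
    exact hM.1 (Subgroup.index_eq_one.mp h)
  obtain ⟨t, ht⟩ := IsPGroup.iff_card.mp hQ
  have htpos : 0 < t := by
    rcases Nat.eq_zero_or_pos t with h | h
    · exact absurd (by rw [ht, h, pow_zero]) hne1
    · exact h
  have hdvd : p ∣ Nat.card (G ⧸ M) := by
    rw [ht]
    exact dvd_pow_self p htpos.ne'
  obtain ⟨y, hy⟩ := exists_prime_orderOf_dvd_card' p hdvd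
  have hy1 : y ≠ 1 := by
    intro h
    rw [h, orderOf_one] at hy
    exact hp.ne_one hy.symm
  have hzp : Subgroup.zpowers y = ⊤ := by
    rcases hsub (Subgroup.zpowers y) with h | h
    · exact absurd (h ▸ Subgroup.mem_zpowers y) (by simpa using hy1)
    · exact h
  have : Nat.card (G ⧸ M) = p := by
    rw [← Subgroup.card_top (G := G ⧸ M), ← hzp, Nat.card_zpowers, hy]
  rw [← hcard, this]

/-- In a finite `p`-group, `p`-th powers lie in the Frattini subgroup. -/
lemma pow_p_mem_frattini (hp : p.Prime) (hG : IsPGroup p G) (x : G) :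
    x ^ p ∈ frattini G := by
  rw [frattini, Order.radical]
  simp only [Subgroup.mem_iInf]
  intro M hM
  haveI : Fact p.Prime := ⟨hp⟩
  have hnormal : ∀ K : Subgroup G, IsCoatom K → K.Normal :=
    ((isNilpotent_of_finite_tfae (G := G)).out 0 2 rfl rfl).mp hG.isNilpotent
  haveI : M.Normal := hnormal M hM
  have hcard : Nat.card (G ⧸ M) = p := coatom_index_eq_prime hp hG hM
  have h1 : ((x : G ⧸ M)) ^ p = 1 := by
    rw [← hcard]
    exact pow_card_eq_one'
  have : ((x ^ p : G) : G ⧸ M) = 1 := by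
    rw [QuotientGroup.mk_pow]; exact h1
  exact (QuotientGroup.eq_one_iff _).mp this

/-- In a finite `p`-group, commutators lie in the Frattini subgroup. -/
lemma commutator_mem_frattini (hp : p.Prime) (hG : IsPGroup p G) (x y : G) :
    ⁅x, y⁆ ∈ frattini G := by
  rw [frattini, Order.radical]
  simp only [Subgroup.mem_iInf]
  intro M hM
  haveI : Fact p.Prime := ⟨hp⟩
  have hnormal : ∀ K : Subgroup G, IsCoatom K → K.Normal :=
    ((isNilpotent_of_finite_tfae (G := G)).out 0 2 rfl rfl).mp hG.isNilpotent
  haveI : M.Normal := hnormal M hM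
  have hcard : Nat.card (G ⧸ M) = p := coatom_index_eq_prime hp hG hM
  haveI : IsCyclic (G ⧸ M) := isCyclic_of_prime_card hcard
  letI : CommGroup (G ⧸ M) := IsCyclic.commGroup
  have : ((⁅x, y⁆ : G) : G ⧸ M) = 1 := by
    have : ((⁅x, y⁆ : G) : G ⧸ M) = ⁅(x : G ⧸ M), (y : G ⧸ M)⁆ :=
      map_commutatorElement (QuotientGroup.mk' M) x y
    rw [this]
    exact commutatorElement_eq_one_iff_mul_comm.mpr (mul_comm _ _)
  exact (QuotientGroup.eq_one_iff _).mp this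

/-- A subgroup containing the Frattini subgroup of a finite `p`-group is normal. -/
lemma normal_of_frattini_le (hp : p.Prime) (hG : IsPGroup p G) {H : Subgroup G}
    (hfr : frattini G ≤ H) : H.Normal := by
  constructor
  intro n hn g
  have h1 : ⁅g, n⁆ ∈ H := hfr (commutator_mem_frattini hp hG g n)
  have h2 : g * n * g⁻¹ = ⁅g, n⁆ * n := by group
  rw [h2]
  exact H.mul_mem h1 hn

/-- An intersection of `m` maximal subgroups of a finite `p`-group has index at most `p^m`. -/
lemma index_iInf_coatoms_le (hp : p.Prime) (hG : IsPGroup p G) {m : ℕ}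
    (f : Fin m → Subgroup G) (hf : ∀ i, IsCoatom (f i)) :
    (⨅ i, f i).index ≤ p ^ m := by
  calc (⨅ i, f i).index ≤ ∏ i, (f i).index := Subgroup.index_iInf_le f
    _ = p ^ m := by
        have : ∀ i, (f i).index = p := fun i => coatom_index_eq_prime hp hG (hf i)
        simp [this]

/-- A subgroup containing the Frattini subgroup with index `p^j` is an intersection
of `j` maximal subgroups. -/
lemma exists_iInf_coatoms (hp : p.Prime) (hG : IsPGroup p G) :
    ∀ (j : ℕ) (H : Subgroup G), frattini G ≤ H → H.index = p ^ j →
      ∃ f : Fin j → Subgroup G, (∀ i, IsCoatom (f i)) ∧ (⨅ i, f i) = H := by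
  intro j
  induction j with
  | zero =>
    intro H _ hidx
    refine ⟨Fin.elim0, fun i => i.elim0, ?_⟩
    rw [iInf_of_empty]
    exact (Subgroup.index_eq_one.mp (by simpa using hidx)).symm
  | succ j ih =>
    intro H hfr hidx
    haveI : Fact p.Prime := ⟨hp⟩
    have hHne : H ≠ ⊤ := by
      intro h
      rw [h, Subgroup.index_top] at hidx
      exact (Nat.one_lt_pow (Nat.succ_ne_zero j) hp.one_lt).ne' hidx.symm
    obtain ⟨M, hM, hHM⟩ :=
      (IsCoatomic.eq_top_or_exists_le_coatom H).resolve_left hHne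
    obtain ⟨g, hgM⟩ : ∃ g, g ∉ M := by
      by_contra h
      push_neg at h
      exact hM.1 (top_le_iff.mp fun x _ => h x)
    haveI : H.Normal := normal_of_frattini_le hp hG hfr
    set π := QuotientGroup.mk' H with hπ
    have hgH : g ∉ H := fun h => hgM (hHM h)
    have hπg : π g ≠ 1 := fun h => hgH ((QuotientGroup.eq_one_iff g).mp h)
    have hordp : orderOf (π g) = p := by
      have h1 : π g ^ p = 1 := by
        rw [← map_pow]
        exact (QuotientGroup.eq_one_iff _).mpr (hfr (pow_p_mem_frattini hp hG g))
      rcases (Nat.dvd_prime hp).mp (orderOf_dvd_of_pow_eq_one h1) with h | h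
      · exact absurd (orderOf_eq_one_iff.mp h) hπg
      · exact h
    set H' := Subgroup.comap π (Subgroup.zpowers (π g)) with hH'
    have hHH' : H ≤ H' := by
      intro x hx
      have hx1 : π x = 1 := (QuotientGroup.eq_one_iff x).mpr hx
      exact Subgroup.mem_comap.mpr (by rw [hx1]; exact Subgroup.one_mem _)
    have hfrH' : frattini G ≤ H' := le_trans hfr hHH'
    have hgH' : g ∈ H' := Subgroup.mem_comap.mpr (Subgroup.mem_zpowers _)
    have hidx' : H'.index = p ^ j := by
      have h1 : H'.index = (Subgroup.zpowers (π g)).index :=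
        (Subgroup.zpowers (π g)).index_comap_of_surjective (QuotientGroup.mk'_surjective H)
      have h2 : Nat.card (Subgroup.zpowers (π g)) * (Subgroup.zpowers (π g)).index
          = Nat.card (G ⧸ H) := Subgroup.card_mul_index _
      rw [Nat.card_zpowers, hordp] at h2
      have h3 : Nat.card (G ⧸ H) = p ^ (j + 1) := hidx
      rw [h3, pow_succ'] at h2
      have := Nat.eq_of_mul_eq_mul_left hp.pos h2
      rw [h1, this]
    obtain ⟨f, hf, hfH⟩ := ih H' hfrH' hidx'
    -- M ⊓ H' = H
    have hMH' : M ⊓ H' = H := by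
      have hle : H ≤ M ⊓ H' := le_inf hHM hHH'
      have hne : ¬H' ≤ M := fun h => hgM (h hgH')
      have hrel : H.relIndex H' * H'.index = H.index :=
        Subgroup.relIndex_mul_index hHH'
      rw [hidx', hidx, pow_succ'] at hrel
      have hrelp : H.relIndex H' = p := by
        exact Nat.eq_of_mul_eq_mul_right (pow_pos hp.pos j) hrel
      have hsplit : H.relIndex (M ⊓ H') * (M ⊓ H').relIndex H' = H.relIndex H' :=
        Subgroup.relIndex_mul_relIndex H (M ⊓ H') H' hle inf_le_right
      have hb : (M ⊓ H').relIndex H' ≠ 1 := by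
        intro h
        exact hne (le_trans (Subgroup.relIndex_eq_one.mp h) inf_le_left)
      have hbdvd : (M ⊓ H').relIndex H' ∣ p := by
        rw [← hrelp, ← hsplit]
        exact dvd_mul_left _ _
      have hbp : (M ⊓ H').relIndex H' = p :=
        ((Nat.dvd_prime hp).mp hbdvd).resolve_left hb
      have ha : H.relIndex (M ⊓ H') = 1 := by
        rw [hbp, hrelp] at hsplit
        have h' : H.relIndex (M ⊓ H') * p = 1 * p := by rw [one_mul]; exact hsplit
        exact Nat.eq_of_mul_eq_mul_right hp.pos h'
      exact le_antisymm (Subgroup.relIndex_eq_one.mp ha) hle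
    refine ⟨Fin.cons M f, ?_, ?_⟩
    · intro i
      refine Fin.cases ?_ ?_ i
      · simpa using hM
      · intro i'
        simpa using hf i'
    · have h0 : (⨅ i : Fin (j + 1), Fin.cons M f i) = M ⊓ ⨅ i', f i' := by
        apply le_antisymm
        · apply le_inf
          · simpa using iInf_le (Fin.cons M f) 0
          · exact le_iInf fun i' => by simpa using iInf_le (Fin.cons M f) i'.succ
        · apply le_iInf
          intro i
          refine Fin.cases ?_ ?_ i
          · simpa using inf_le_left
          · intro i'
            simpa using le_trans inf_le_right (iInf_le f i')
      rw [h0, hfH, hMH']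

end Aux

/-- The subgroup `H` has intersection number `m`: it is an intersection of `m` maximal
subgroups but not an intersection of fewer than `m` maximal subgroups. (The intersection
of zero maximal subgroups is `G`, so `G` itself has intersection number `0`.) -/
def GroupInterNumEq {G : Type*} [Group G] (H : Subgroup G) (m : ℕ) : Prop :=
  (∃ f : Fin m → Subgroup G, (∀ i, IsCoatom (f i)) ∧ (⨅ i, f i) = H) ∧
    ∀ j < m, ¬ ∃ f : Fin j → Subgroup G, (∀ i, IsCoatom (f i)) ∧ (⨅ i, f i) = H

/-- Let `G` be a finite `p`-group of rank `n` and let `H` be a subgroup containing the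
Frattini subgroup. For `0 ≤ k ≤ n`, the intersection number of `H` is `n - k` if and
only if the index `[G : H]` is `p^(n-k)`. -/
theorem interNum_iff_index (p n k : ℕ) (hp : p.Prime) (G : Type*) [Group G] [Finite G]
    (hG : IsPGroup p G) (hrank : Group.rank G = n) (H : Subgroup G)
    (hfr : frattini G ≤ H) (hk : k ≤ n) :
    GroupInterNumEq H (n - k) ↔ H.index = p ^ (n - k) := by
  haveI : Fact p.Prime := ⟨hp⟩
  set m := n - k with hm
  -- H.index is a power of p
  obtain ⟨t, ht⟩ := IsPGroup.iff_card.mp hG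
  have hdvd : H.index ∣ p ^ t := ht ▸ Subgroup.index_dvd_card (H := H)
  obtain ⟨j, hjt, hidxj⟩ := (Nat.dvd_prime_pow hp).mp hdvd
  constructor
  · rintro ⟨⟨f, hf, hfH⟩, hmin⟩
    have h1 : H.index ≤ p ^ m := by
      have := index_iInf_coatoms_le hp hG f hf
      rwa [hfH] at this
    have hjm : j ≤ m := by
      rw [hidxj] at h1
      exact (Nat.pow_le_pow_iff_right hp.one_lt).mp h1
    rcases hjm.lt_or_eq with hlt | heq
    · exact absurd (exists_iInf_coatoms hp hG j H hfr hidxj) (hmin j hlt)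
    · rw [hidxj, heq]
  · intro hidx
    refine ⟨exists_iInf_coatoms hp hG m H hfr hidx, ?_⟩
    rintro j' hj' ⟨f, hf, hfH⟩
    have h1 : H.index ≤ p ^ j' := by
      have := index_iInf_coatoms_le hp hG f hf
      rwa [hfH] at this
    rw [hidx] at h1
    exact absurd ((Nat.pow_le_pow_iff_right hp.one_lt).mp h1) (Nat.not_le.mpr hj')
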